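/- Let k ≥ 1 and d ≥ 1, and for positive integer z define φ_z(x) = x·(ln(e/x^{1/z}))^{z/2} on (0,1]. Define g : (0,1]^k → ℝ by g(α) = e^{-2∑_i α_i} · ∑_{ℓ=1}^d ∑_{S⊆[k],|S|=ℓ} ∑_{z∈[m]^S, ∑_{i∈S} z_i = d} ∏_{i∈S} φ_{z_i}(α_i). Then g is Schur-concave; in particular, for every α ∈ (0,1]^k, g(α_1,...,α_k) ≤ g(ᾱ,...,ᾱ) where ᾱ = (∑_i α_i)/k. -/

import Mathlib

open Finset

/-- `φ_z(x) = x (ln(e/x^{1/z}))^{z/2}`. -/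
noncomputable def phi (z : ℕ) (x : ℝ) : ℝ :=
  x * (Real.log (Real.exp 1 / x ^ ((1 : ℝ) / z))) ^ ((z : ℝ) / 2)

noncomputable def phiD (z : ℕ) (x : ℝ) : ℝ :=
  (1 - Real.log x / z) ^ ((z : ℝ) / 2) - (1/2) * (1 - Real.log x / z) ^ ((z : ℝ) / 2 - 1)

lemma phi_eqOn {z : ℕ} (hz : 1 ≤ z) {x : ℝ} (hx : 0 < x) :
    phi z x = x * (1 - Real.log x / z) ^ ((z : ℝ) / 2) := by
  have hz' : (z : ℝ) ≠ 0 := by positivity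
  unfold phi
  rw [Real.log_div (Real.exp_ne_zero 1) (by positivity), Real.log_exp,
    Real.log_rpow hx]
  ring_nf

lemma phi_hasDerivAt {z : ℕ} (hz : 1 ≤ z) {x : ℝ} (hx : 0 < x) (hx1 : x ≤ 1) :
    HasDerivAt (phi z) (phiD z x) x := by
  have hz' : (0:ℝ) < z := by exact_mod_cast hz
  have hw : (1:ℝ) ≤ 1 - Real.log x / z := by
    have : Real.log x ≤ 0 := Real.log_nonpos hx.le hx1
    have : Real.log x / z ≤ 0 := div_nonpos_of_nonpos_of_nonneg this hz'.le
    linarith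
  have hwx : HasDerivAt (fun y : ℝ => 1 - Real.log y / (z:ℝ)) (-(1 / (x * z))) x := by
    have := (Real.hasDerivAt_log hx.ne').div_const (z:ℝ)
    have h2 := (hasDerivAt_const x (1:ℝ)).sub this
    exact h2.congr_deriv (by ring)
  have hpow : HasDerivAt (fun y : ℝ => (1 - Real.log y / (z:ℝ)) ^ ((z:ℝ)/2))
      (-(1 / (x * z)) * ((z:ℝ)/2) * (1 - Real.log x / z) ^ ((z:ℝ)/2 - 1)) x :=
    hwx.rpow_const (Or.inl (by linarith))
  have hmul := (hasDerivAt_id x).mul hpow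
  have heq : ∀ᶠ y in nhds x, phi z y = y * (1 - Real.log y / z) ^ ((z : ℝ) / 2) := by
    filter_upwards [eventually_gt_nhds hx] with y hy
    exact phi_eqOn hz hy
  have : HasDerivAt (phi z) (1 * (1 - Real.log x / (z:ℝ)) ^ ((z:ℝ)/2) +
      x * (-(1 / (x * z)) * ((z:ℝ)/2) * (1 - Real.log x / z) ^ ((z:ℝ)/2 - 1))) x := by
    exact hmul.congr_of_eventuallyEq (heq.mono fun y h => by simpa using h)
  convert this using 1
  unfold phiD
  field_simp
  ring

-- ψ c s = s^c - (1/2) s^(c-1), monotone on Ici 1 for c > 0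
lemma psi_mono {c : ℝ} (hc : 0 < c) :
    MonotoneOn (fun s : ℝ => s ^ c - (1/2) * s ^ (c - 1)) (Set.Ici 1) := by
  have hderiv : ∀ s : ℝ, 1 ≤ s → HasDerivAt (fun s : ℝ => s ^ c - (1/2) * s ^ (c - 1))
      (c * s ^ (c-1) - (1/2) * ((c-1) * s ^ (c-2))) s := by
    intro s hs
    have hs0 : s ≠ 0 := by linarith
    have h1 := Real.hasDerivAt_rpow_const (x := s) (p := c) (Or.inl hs0)
    have h2 := (Real.hasDerivAt_rpow_const (x := s) (p := c - 1) (Or.inl hs0)).const_mul (1/2:ℝ)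
    have := h1.sub h2
    exact this.congr_deriv (by ring_nf)
  apply monotoneOn_of_deriv_nonneg (convex_Ici 1)
  · exact fun s hs => (hderiv s hs).continuousAt.continuousWithinAt
  · intro s hs
    rw [interior_Ici] at hs
    exact (hderiv s hs.le).differentiableAt.differentiableWithinAt
  · intro s hs
    rw [interior_Ici] at hs
    rw [(hderiv s hs.le).deriv]
    have hs0 : (0:ℝ) < s := by linarith [(show (1:ℝ) < s from hs)]
    have e1 : s ^ (c - 1) = s ^ (c - 2) * s := by
      rw [← Real.rpow_add_one hs0.ne' (c-2)]; ring_nf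
    have e2 : (0:ℝ) ≤ s ^ (c-2) := Real.rpow_nonneg hs0.le _
    rw [e1]
    have hs1 : (1:ℝ) ≤ s := hs.le
    have h3 : (0:ℝ) ≤ (c * (s - 1) + (c + 1) / 2) * s ^ (c - 2) :=
      mul_nonneg (by nlinarith) e2
    nlinarith [h3]

lemma w_ge_one {z : ℕ} (hz : 1 ≤ z) {x : ℝ} (hx : 0 < x) (hx1 : x ≤ 1) :
    (1:ℝ) ≤ 1 - Real.log x / z := by
  have hz' : (0:ℝ) < z := by exact_mod_cast hz
  have h : Real.log x ≤ 0 := Real.log_nonpos hx.le hx1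
  have : Real.log x / z ≤ 0 := div_nonpos_of_nonpos_of_nonneg h hz'.le
  linarith

lemma phiD_nonneg {z : ℕ} (hz : 1 ≤ z) {x : ℝ} (hx : 0 < x) (hx1 : x ≤ 1) :
    0 ≤ phiD z x := by
  have hw : (1:ℝ) ≤ 1 - Real.log x / (z:ℝ) := w_ge_one hz hx hx1
  have hw0 : (0:ℝ) < 1 - Real.log x / (z:ℝ) := by linarith
  have e1 : (1 - Real.log x / (z:ℝ)) ^ ((z:ℝ)/2)
      = (1 - Real.log x / (z:ℝ)) ^ ((z:ℝ)/2 - 1) * (1 - Real.log x / (z:ℝ)) := by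
    rw [← Real.rpow_add_one hw0.ne' ((z:ℝ)/2 - 1)]; ring_nf
  have e2 : (0:ℝ) ≤ (1 - Real.log x / (z:ℝ)) ^ ((z:ℝ)/2 - 1) := Real.rpow_nonneg hw0.le _
  unfold phiD
  rw [e1]
  nlinarith [mul_nonneg e2 (show (0:ℝ) ≤ (1 - Real.log x / (z:ℝ)) - 1/2 by linarith)]

lemma phiD_antitoneOn {z : ℕ} (hz : 1 ≤ z) : AntitoneOn (phiD z) (Set.Ioo 0 1) := by
  intro x hx y hy hxy
  have hz' : (0:ℝ) < z := by exact_mod_cast hz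
  have hc : (0:ℝ) < (z:ℝ)/2 := by positivity
  have hwx := w_ge_one hz hx.1 hx.2.le
  have hwy := w_ge_one hz hy.1 hy.2.le
  have hle : 1 - Real.log y / z ≤ 1 - Real.log x / z := by
    have h1 : Real.log x ≤ Real.log y := Real.log_le_log hx.1 hxy
    have h2 : Real.log x / z ≤ Real.log y / z := by gcongr
    linarith
  exact psi_mono hc hwy hwx hle

lemma phi_nonneg {z : ℕ} (hz : 1 ≤ z) {x : ℝ} (hx : 0 < x) (hx1 : x ≤ 1) : 0 ≤ phi z x := by
  rw [phi_eqOn hz hx]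
  have hw := w_ge_one hz hx hx1
  exact mul_nonneg hx.le (Real.rpow_nonneg (by linarith) _)

lemma phi_monotoneOn {z : ℕ} (hz : 1 ≤ z) : MonotoneOn (phi z) (Set.Ioc 0 1) := by
  apply monotoneOn_of_deriv_nonneg (convex_Ioc 0 1)
  · exact fun x hx => (phi_hasDerivAt hz hx.1 hx.2).continuousAt.continuousWithinAt
  · intro x hx
    rw [interior_Ioc] at hx
    exact (phi_hasDerivAt hz hx.1 hx.2.le).differentiableAt.differentiableWithinAt
  · intro x hx
    rw [interior_Ioc] at hx
    rw [(phi_hasDerivAt hz hx.1 hx.2.le).deriv]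
    exact phiD_nonneg hz hx.1 hx.2.le

lemma phi_concaveOn {z : ℕ} (hz : 1 ≤ z) : ConcaveOn ℝ (Set.Ioc 0 1) (phi z) := by
  apply AntitoneOn.concaveOn_of_deriv (convex_Ioc 0 1)
  · exact fun x hx => (phi_hasDerivAt hz hx.1 hx.2).continuousAt.continuousWithinAt
  · intro x hx
    rw [interior_Ioc] at hx
    exact (phi_hasDerivAt hz hx.1 hx.2.le).differentiableAt.differentiableWithinAt
  · rw [interior_Ioc]
    intro x hx y hy hxy
    rw [(phi_hasDerivAt hz hx.1 hx.2.le).deriv, (phi_hasDerivAt hz hy.1 hy.2.le).deriv]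
    exact phiD_antitoneOn hz hx hy hxy

/-- Increment inequality from concavity: if `x ≤ a ≤ b ≤ y` with `a + b = x + y`,
then `f y - f b ≤ f a - f x`. -/
lemma concave_incr {f : ℝ → ℝ} {s : Set ℝ} (hf : ConcaveOn ℝ s f)
    {x a b y : ℝ} (hx : x ∈ s) (hy : y ∈ s)
    (hxa : x ≤ a) (hab : a ≤ b) (hby : b ≤ y) (hsum : a + b = x + y) :
    f y - f b ≤ f a - f x := by
  rcases eq_or_lt_of_le (hxa.trans (hab.trans hby)) with h | h
  · have hax : a = x := le_antisymm (by linarith) hxa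
    have hby' : b = y := by linarith
    rw [hax, hby']
    simp
  · set lam := (a - x) / (y - x) with hlam
    have hyx : 0 < y - x := by linarith
    have h0 : 0 ≤ lam := div_nonneg (by linarith) hyx.le
    have h1 : lam ≤ 1 := by
      rw [hlam, div_le_one hyx]; linarith
    have hmul : lam * (y - x) = a - x := by
      rw [hlam]; field_simp
    have ha' : (1 - lam) * x + lam * y = a := by linear_combination hmul
    have hb' : lam * x + (1 - lam) * y = b := by linear_combination -hmul - hsum
    have hfa : (1 - lam) * f x + lam * f y ≤ f a := by
      have := hf.2 hx hy (sub_nonneg.2 h1) h0 (by ring)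
      simp only [smul_eq_mul] at this
      rwa [ha'] at this
    have hfb : lam * f x + (1 - lam) * f y ≤ f b := by
      have := hf.2 hx hy h0 (sub_nonneg.2 h1) (by ring)
      simp only [smul_eq_mul] at this
      rwa [hb'] at this
    nlinarith [hfa, hfb]

/-- Symmetrized product transfer inequality. -/
lemma prod_transfer {f g : ℝ → ℝ} {s : Set ℝ}
    (hfc : ConcaveOn ℝ s f) (hfm : MonotoneOn f s) (hf0 : ∀ t ∈ s, 0 ≤ f t)
    (hgc : ConcaveOn ℝ s g) (hgm : MonotoneOn g s) (hg0 : ∀ t ∈ s, 0 ≤ g t)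
    {x a b y : ℝ} (hx : x ∈ s) (ha : a ∈ s) (hb : b ∈ s) (hy : y ∈ s)
    (hxa : x ≤ a) (hab : a ≤ b) (hby : b ≤ y) (hsum : a + b = x + y) :
    f x * g y + f y * g x ≤ f a * g b + f b * g a := by
  have hfi := concave_incr hfc hx hy hxa hab hby hsum
  have hgi := concave_incr hgc hx hy hxa hab hby hsum
  have hfb : f b ≤ f y := hfm hb hy hby
  have hfx : f x ≤ f b := hfm hx hb (hxa.trans hab)
  have hgb : g b ≤ g y := hgm hb hy hby
  have hgx : g x ≤ g b := hgm hx hb (hxa.trans hab)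
  have hfb0 : 0 ≤ f b := hf0 b hb
  have hgb0 : 0 ≤ g b := hg0 b hb
  nlinarith [mul_nonneg (sub_nonneg.2 hfb) (sub_nonneg.2 hgx),
    mul_nonneg (sub_nonneg.2 hgb) (sub_nonneg.2 hfx),
    mul_le_mul_of_nonneg_right (by linarith : f y - f b + f x ≤ f a) hgb0,
    mul_le_mul_of_nonneg_right (by linarith : g y - g b + g x ≤ g a) hfb0]

noncomputable def Tsum (k m d : ℕ) (α : Fin k → ℝ) : ℝ :=
  ∑ ℓ ∈ Finset.Icc 1 d,
      ∑ S ∈ Finset.univ.filter (fun S : Finset (Fin k) => S.card = ℓ),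
        ∑ z ∈ (Finset.univ : Finset (Fin k → Fin (m + 1))).filter
            (fun z => (∀ i, (i ∈ S → 1 ≤ (z i : ℕ)) ∧ (i ∉ S → (z i : ℕ) = 0)) ∧
              ∑ i ∈ S, (z i : ℕ) = d),
          ∏ i ∈ S, phi (z i : ℕ) (α i)

section pair
variable {k m d : ℕ}

lemma tsum_pair {β : Fin k → ℝ} (hβ : ∀ i', β i' ∈ Set.Ioc (0:ℝ) 1)
    {i j : Fin k} (hij : i ≠ j) {a b : ℝ}
    (ha : a ∈ Set.Ioc (0:ℝ) 1) (hb : b ∈ Set.Ioc (0:ℝ) 1)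
    (hxa : β i ≤ a) (hab : a ≤ b) (hby : b ≤ β j) (habsum : a + b = β i + β j) :
    Tsum k m d β ≤ Tsum k m d (Function.update (Function.update β i a) j b) := by
  classical
  set β' := Function.update (Function.update β i a) j b with hβ'def
  have hβ'i : β' i = a := by
    rw [hβ'def, Function.update_of_ne hij, Function.update_self]
  have hβ'j : β' j = b := by rw [hβ'def, Function.update_self]
  have hβ'o : ∀ t, t ≠ i → t ≠ j → β' t = β t := fun t hti htj => by
    rw [hβ'def, Function.update_of_ne htj, Function.update_of_ne hti]
  have hβ' : ∀ i', β' i' ∈ Set.Ioc (0:ℝ) 1 := by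
    intro t
    by_cases hti : t = i
    · rw [hti, hβ'i]; exact ha
    by_cases htj : t = j
    · rw [htj, hβ'j]; exact hb
    · rw [hβ'o t hti htj]; exact hβ t
  unfold Tsum
  apply Finset.sum_le_sum
  intro ℓ _
  -- collapse double sum to a sigma sum
  rw [Finset.sum_sigma', Finset.sum_sigma']
  set σ := Equiv.swap i j with hσdef
  have hσσ : ∀ t, σ (σ t) = t := fun t => Equiv.swap_apply_self i j t
  set A := (Finset.univ.filter (fun S : Finset (Fin k) => S.card = ℓ)).sigma
      (fun S => (Finset.univ : Finset (Fin k → Fin (m + 1))).filter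
            (fun z => (∀ i, (i ∈ S → 1 ≤ (z i : ℕ)) ∧ (i ∉ S → (z i : ℕ) = 0)) ∧
              ∑ i ∈ S, (z i : ℕ) = d)) with hAdef
  set W : ((_ : Finset (Fin k)) × (Fin k → Fin (m + 1))) → (Fin k → ℝ) → ℝ :=
    fun p γ => ∏ t ∈ p.1, phi (p.2 t) (γ t) with hWdef
  set e : ((_ : Finset (Fin k)) × (Fin k → Fin (m + 1))) →
      ((_ : Finset (Fin k)) × (Fin k → Fin (m + 1))) :=
    fun p => ⟨p.1.image σ, p.2 ∘ σ⟩ with hedef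
  have hmemσ : ∀ (S : Finset (Fin k)) (t : Fin k), t ∈ S.image σ ↔ σ t ∈ S := by
    intro S t
    simp only [Finset.mem_image]
    constructor
    · rintro ⟨s, hs, rfl⟩; rw [hσσ]; exact hs
    · intro h; exact ⟨σ t, h, hσσ t⟩
  have hee : ∀ p, e (e p) = p := by
    rintro ⟨S, z⟩
    simp only [hedef]
    congr 1
    · rw [Finset.image_image]
      simp [Function.comp_def, hσσ]
    · funext t; simp [Function.comp_def, hσσ]
  have hA : ∀ p ∈ A, e p ∈ A := by
    rintro ⟨S, z⟩ hp
    rw [hAdef, Finset.mem_sigma, Finset.mem_filter, Finset.mem_filter] at hp ⊢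
    obtain ⟨⟨-, hcard⟩, -, ⟨hsupp, hsum⟩⟩ := hp
    refine ⟨⟨Finset.mem_univ _, ?_⟩, Finset.mem_univ _, ⟨?_, ?_⟩⟩
    · rw [Finset.card_image_of_injective _ σ.injective, hcard]
    · intro t
      constructor
      · intro ht; exact (hsupp (σ t)).1 ((hmemσ S t).1 ht)
      · intro ht; exact (hsupp (σ t)).2 (fun h => ht ((hmemσ S t).2 h))
    · show ∑ t ∈ S.image σ, ((z ∘ σ) t : ℕ) = d
      rw [Finset.sum_image (fun x _ y _ h => σ.injective h)]
      simpa [hσσ] using hsum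
  have hWe : ∀ p (γ : Fin k → ℝ), W (e p) γ = ∏ t ∈ p.1, phi (p.2 t) (γ (σ t)) := by
    rintro ⟨S, z⟩ γ
    show ∏ t ∈ S.image σ, phi (z (σ t)) (γ t) = _
    rw [Finset.prod_image (fun x _ y _ h => σ.injective h)]
    exact Finset.prod_congr rfl fun t _ => by rw [hσσ]
  have hswap : ∀ (γ : Fin k → ℝ), ∑ p ∈ A, W p γ = ∑ p ∈ A, W (e p) γ := by
    intro γ
    refine Finset.sum_nbij' e e hA hA (fun p _ => hee p) (fun p _ => hee p) ?_
    intro p _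
    rw [hee p]
  have hσi : σ i = j := Equiv.swap_apply_left i j
  have hσj : σ j = i := Equiv.swap_apply_right i j
  have hσo : ∀ t, t ≠ i → t ≠ j → σ t = t := fun t h1 h2 => Equiv.swap_apply_of_ne_of_ne h1 h2
  have key : ∀ p ∈ A, W p β + W (e p) β ≤ W p β' + W (e p) β' := by
    rintro ⟨S, z⟩ hp
    rw [hAdef, Finset.mem_sigma, Finset.mem_filter, Finset.mem_filter] at hp
    obtain ⟨⟨-, hcard⟩, -, ⟨hsupp, hsumz⟩⟩ := hp
    have hz1 : ∀ t ∈ S, 1 ≤ ((z t : ℕ)) := fun t ht => (hsupp t).1 ht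
    rw [hWe ⟨S, z⟩ β, hWe ⟨S, z⟩ β']
    show (∏ t ∈ S, phi (z t) (β t)) + (∏ t ∈ S, phi (z t) (β (σ t)))
      ≤ (∏ t ∈ S, phi (z t) (β' t)) + (∏ t ∈ S, phi (z t) (β' (σ t)))
    by_cases hiS : i ∈ S <;> by_cases hjS : j ∈ S
    · -- both in S
      have hji : j ≠ i := Ne.symm hij
      have hjS' : j ∈ S.erase i := Finset.mem_erase.2 ⟨hji, hjS⟩
      have hziN : 1 ≤ ((z i : ℕ)) := hz1 i hiS
      have hzjN : 1 ≤ ((z j : ℕ)) := hz1 j hjS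
      have hexp : ∀ (γ : Fin k → ℝ), (∀ t, t ≠ i → t ≠ j → γ t = β t) →
          ∏ t ∈ S, phi (z t) (γ t)
            = phi (z i) (γ i) * (phi (z j) (γ j) *
                ∏ t ∈ (S.erase i).erase j, phi (z t) (β t)) := by
        intro γ hγ
        rw [← Finset.mul_prod_erase S _ hiS, ← Finset.mul_prod_erase (S.erase i) _ hjS']
        congr 2
        refine Finset.prod_congr rfl fun t ht => ?_
        have htj := (Finset.mem_erase.1 ht).1
        have hti := (Finset.mem_erase.1 (Finset.mem_of_mem_erase ht)).1
        rw [hγ t hti htj]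
      have hC0 : 0 ≤ ∏ t ∈ (S.erase i).erase j, phi (z t) (β t) :=
        Finset.prod_nonneg fun t ht => by
          have htS : t ∈ S := Finset.mem_of_mem_erase (Finset.mem_of_mem_erase ht)
          exact phi_nonneg (hz1 t htS) (hβ t).1 (hβ t).2
      rw [hexp β (fun t _ _ => rfl),
        hexp (fun t => β (σ t)) (fun t h1 h2 => by show β (σ t) = β t; rw [hσo t h1 h2]),
        hexp β' (fun t h1 h2 => hβ'o t h1 h2),
        hexp (fun t => β' (σ t)) (fun t h1 h2 => by show β' (σ t) = β t; rw [hσo t h1 h2]; exact hβ'o t h1 h2)]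
      simp only [hσi, hσj, hβ'i, hβ'j]
      have ht := prod_transfer (phi_concaveOn hziN) (phi_monotoneOn hziN)
        (fun t ht => phi_nonneg hziN ht.1 ht.2)
        (phi_concaveOn hzjN) (phi_monotoneOn hzjN)
        (fun t ht => phi_nonneg hzjN ht.1 ht.2)
        (hβ i) ha hb (hβ j) hxa hab hby habsum
      nlinarith [mul_le_mul_of_nonneg_right ht hC0]
    · -- i ∈ S, j ∉ S
      have hziN : 1 ≤ ((z i : ℕ)) := hz1 i hiS
      have hexp : ∀ (γ : Fin k → ℝ), (∀ t, t ≠ i → t ≠ j → γ t = β t) →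
          ∏ t ∈ S, phi (z t) (γ t)
            = phi (z i) (γ i) * ∏ t ∈ S.erase i, phi (z t) (β t) := by
        intro γ hγ
        rw [← Finset.mul_prod_erase S _ hiS]
        congr 1
        refine Finset.prod_congr rfl fun t ht => ?_
        have hti := (Finset.mem_erase.1 ht).1
        have htj : t ≠ j := fun h => hjS (h ▸ Finset.mem_of_mem_erase ht)
        rw [hγ t hti htj]
      have hC0 : 0 ≤ ∏ t ∈ S.erase i, phi (z t) (β t) :=
        Finset.prod_nonneg fun t ht => by
          have htS : t ∈ S := Finset.mem_of_mem_erase ht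
          exact phi_nonneg (hz1 t htS) (hβ t).1 (hβ t).2
      rw [hexp β (fun t _ _ => rfl),
        hexp (fun t => β (σ t)) (fun t h1 h2 => by show β (σ t) = β t; rw [hσo t h1 h2]),
        hexp β' (fun t h1 h2 => hβ'o t h1 h2),
        hexp (fun t => β' (σ t)) (fun t h1 h2 => by show β' (σ t) = β t; rw [hσo t h1 h2]; exact hβ'o t h1 h2)]
      simp only [hσi, hσj, hβ'i, hβ'j]
      have hinc := concave_incr (phi_concaveOn hziN) (hβ i) (hβ j) hxa hab hby habsum
      nlinarith [mul_nonneg (show (0:ℝ) ≤ phi (z i) a + phi (z i) b - phi (z i) (β i) - phi (z i) (β j) by linarith) hC0]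
    · -- j ∈ S, i ∉ S
      have hzjN : 1 ≤ ((z j : ℕ)) := hz1 j hjS
      have hexp : ∀ (γ : Fin k → ℝ), (∀ t, t ≠ i → t ≠ j → γ t = β t) →
          ∏ t ∈ S, phi (z t) (γ t)
            = phi (z j) (γ j) * ∏ t ∈ S.erase j, phi (z t) (β t) := by
        intro γ hγ
        rw [← Finset.mul_prod_erase S _ hjS]
        congr 1
        refine Finset.prod_congr rfl fun t ht => ?_
        have htj := (Finset.mem_erase.1 ht).1
        have hti : t ≠ i := fun h => hiS (h ▸ Finset.mem_of_mem_erase ht)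
        rw [hγ t hti htj]
      have hC0 : 0 ≤ ∏ t ∈ S.erase j, phi (z t) (β t) :=
        Finset.prod_nonneg fun t ht => by
          have htS : t ∈ S := Finset.mem_of_mem_erase ht
          exact phi_nonneg (hz1 t htS) (hβ t).1 (hβ t).2
      rw [hexp β (fun t _ _ => rfl),
        hexp (fun t => β (σ t)) (fun t h1 h2 => by show β (σ t) = β t; rw [hσo t h1 h2]),
        hexp β' (fun t h1 h2 => hβ'o t h1 h2),
        hexp (fun t => β' (σ t)) (fun t h1 h2 => by show β' (σ t) = β t; rw [hσo t h1 h2]; exact hβ'o t h1 h2)]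
      simp only [hσi, hσj, hβ'i, hβ'j]
      have hinc := concave_incr (phi_concaveOn hzjN) (hβ i) (hβ j) hxa hab hby habsum
      nlinarith [mul_nonneg (show (0:ℝ) ≤ phi (z j) a + phi (z j) b - phi (z j) (β i) - phi (z j) (β j) by linarith) hC0]
    · -- neither
      have hexp : ∀ (γ : Fin k → ℝ), (∀ t, t ≠ i → t ≠ j → γ t = β t) →
          ∏ t ∈ S, phi (z t) (γ t) = ∏ t ∈ S, phi (z t) (β t) := by
        intro γ hγ
        refine Finset.prod_congr rfl fun t ht => ?_
        have hti : t ≠ i := fun h => hiS (h ▸ ht)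
        have htj : t ≠ j := fun h => hjS (h ▸ ht)
        rw [hγ t hti htj]
      rw [hexp β (fun t _ _ => rfl),
        hexp (fun t => β (σ t)) (fun t h1 h2 => by show β (σ t) = β t; rw [hσo t h1 h2]),
        hexp β' (fun t h1 h2 => hβ'o t h1 h2),
        hexp (fun t => β' (σ t)) (fun t h1 h2 => by show β' (σ t) = β t; rw [hσo t h1 h2]; exact hβ'o t h1 h2)]
  have h2 : ∑ p ∈ A, (W p β + W (e p) β) ≤ ∑ p ∈ A, (W p β' + W (e p) β') :=
    Finset.sum_le_sum key
  rw [Finset.sum_add_distrib, Finset.sum_add_distrib, ← hswap β, ← hswap β'] at h2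
  show ∑ p ∈ A, W p β ≤ ∑ p ∈ A, W p β'
  linarith


end pair

lemma Tsum_le_uniform {k m d : ℕ} (hk : 0 < k) :
    ∀ (n : ℕ) (α : Fin k → ℝ), (∀ i', α i' ∈ Set.Ioc (0:ℝ) 1) →
      (Finset.univ.filter (fun t => α t ≠ (∑ t, α t) / k)).card ≤ n →
      Tsum k m d α ≤ Tsum k m d (fun _ => (∑ t, α t) / k) := by
  intro n
  induction n with
  | zero =>
    intro α hα hn
    have hall : ∀ t, α t = (∑ t, α t) / k := by
      intro t
      by_contra h
      have : t ∈ Finset.univ.filter (fun t => α t ≠ (∑ t, α t) / k) :=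
        Finset.mem_filter.2 ⟨Finset.mem_univ _, h⟩
      have := Finset.card_pos.2 ⟨t, this⟩
      omega
    have hfun : α = fun _ => (∑ t, α t) / k := funext hall
    set μ := (∑ t, α t) / k with hμ
    rw [hfun]
  | succ n ih =>
    intro α hα hn
    set μ := (∑ t, α t) / k with hμdef
    have hk' : (0:ℝ) < k := by exact_mod_cast hk
    have hne : (Finset.univ : Finset (Fin k)).Nonempty := ⟨⟨0, hk⟩, Finset.mem_univ _⟩
    have hkμ : (k:ℝ) * μ = ∑ t, α t := by rw [hμdef]; field_simp
    have hconstsum : ∑ _t : Fin k, μ = (k:ℝ) * μ := by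
      rw [Finset.sum_const, Finset.card_univ, Fintype.card_fin, nsmul_eq_mul]
    have hμs : μ ∈ Set.Ioc (0:ℝ) 1 := by
      constructor
      · exact div_pos (Finset.sum_pos (fun t _ => (hα t).1) hne) hk'
      · rw [hμdef, div_le_one hk']
        calc ∑ t, α t ≤ ∑ _t : Fin k, (1:ℝ) := Finset.sum_le_sum fun t _ => (hα t).2
        _ = k := by rw [Finset.sum_const, Finset.card_univ, Fintype.card_fin, nsmul_eq_mul, mul_one]
    by_cases hall : ∀ t, α t = μ
    · have hfun : α = fun _ => μ := funext hall
      rw [hfun]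
    · push_neg at hall
      obtain ⟨t₀, ht₀⟩ := hall
      have hex_lt : ∃ i₀, α i₀ < μ := by
        by_contra hno
        push_neg at hno
        have hlt : (∑ _t : Fin k, μ) < ∑ t, α t :=
          Finset.sum_lt_sum (fun t _ => hno t) ⟨t₀, Finset.mem_univ _, lt_of_le_of_ne (hno t₀) (Ne.symm ht₀)⟩
        rw [hconstsum, hkμ] at hlt
        exact lt_irrefl _ hlt
      have hex_gt : ∃ j₀, μ < α j₀ := by
        by_contra hno
        push_neg at hno
        have hlt : (∑ t, α t) < ∑ _t : Fin k, μ :=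
          Finset.sum_lt_sum (fun t _ => hno t) ⟨t₀, Finset.mem_univ _, lt_of_le_of_ne (hno t₀) ht₀⟩
        rw [hconstsum, hkμ] at hlt
        exact lt_irrefl _ hlt
      obtain ⟨i₀, hi₀⟩ := hex_lt
      obtain ⟨j₀, hj₀⟩ := hex_gt
      have hij : i₀ ≠ j₀ := fun h => by rw [h] at hi₀; linarith
      set x := α i₀ with hxdef
      set y := α j₀ with hydef
      set δ := min (μ - x) (y - μ) with hδdef
      have hδpos : 0 < δ := lt_min (by linarith) (by linarith)
      set a := x + δ with hadef
      set b := y - δ with hbdef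
      have hxa : x ≤ a := by rw [hadef]; linarith
      have haμ : a ≤ μ := by
        have := min_le_left (μ - x) (y - μ); rw [hadef]; linarith
      have hμb : μ ≤ b := by
        have := min_le_right (μ - x) (y - μ); rw [hbdef]; linarith
      have hab : a ≤ b := le_trans haμ hμb
      have hby : b ≤ y := by rw [hbdef]; linarith
      have habsum : a + b = x + y := by rw [hadef, hbdef]; ring
      have ha : a ∈ Set.Ioc (0:ℝ) 1 := ⟨lt_of_lt_of_le (hα i₀).1 hxa, le_trans haμ hμs.2⟩
      have hb : b ∈ Set.Ioc (0:ℝ) 1 := ⟨lt_of_lt_of_le hμs.1 hμb, le_trans hby (hα j₀).2⟩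
      set α' := Function.update (Function.update α i₀ a) j₀ b with hα'def
      have hα'i : α' i₀ = a := by
        rw [hα'def, Function.update_of_ne hij, Function.update_self]
      have hα'j : α' j₀ = b := by rw [hα'def, Function.update_self]
      have hα'o : ∀ t, t ≠ i₀ → t ≠ j₀ → α' t = α t := fun t h1 h2 => by
        rw [hα'def, Function.update_of_ne h2, Function.update_of_ne h1]
      have hα' : ∀ t, α' t ∈ Set.Ioc (0:ℝ) 1 := by
        intro t
        by_cases h1 : t = i₀
        · rw [h1, hα'i]; exact ha
        by_cases h2 : t = j₀
        · rw [h2, hα'j]; exact hb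
        · rw [hα'o t h1 h2]; exact hα t
      have hsum' : ∑ t, α' t = ∑ t, α t := by
        rw [hα'def]
        rw [Finset.sum_update_of_mem (Finset.mem_univ j₀)]
        rw [Finset.sum_update_of_mem (by simp [hij] : i₀ ∈ Finset.univ \ {j₀})]
        have h1 : ∑ t, α t = α j₀ + ∑ t ∈ Finset.univ \ {j₀}, α t := by
          rw [Finset.sum_eq_add_sum_sdiff_singleton_of_mem (Finset.mem_univ j₀)]
        have h2 : ∑ t ∈ Finset.univ \ {j₀}, α t
            = α i₀ + ∑ t ∈ (Finset.univ \ {j₀}) \ {i₀}, α t := by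
          rw [Finset.sum_eq_add_sum_sdiff_singleton_of_mem (by simp [hij] : i₀ ∈ Finset.univ \ {j₀})]
        rw [h1, h2]
        have : ((Finset.univ \ {j₀}) \ {i₀} : Finset (Fin k))
            = (Finset.univ \ {j₀}) \ {i₀} := rfl
        linarith [habsum]
      have hT1 : Tsum k m d α ≤ Tsum k m d α' :=
        tsum_pair hα hij ha hb hxa hab hby habsum
      have hbadmem : i₀ ∈ Finset.univ.filter (fun t => α t ≠ μ) :=
        Finset.mem_filter.2 ⟨Finset.mem_univ _, fun h => hi₀.ne (hxdef.trans h)⟩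
      have hbadmemj : j₀ ∈ Finset.univ.filter (fun t => α t ≠ μ) :=
        Finset.mem_filter.2 ⟨Finset.mem_univ _, fun h => hj₀.ne' (hydef.trans h)⟩
      have hcard' : (Finset.univ.filter (fun t => α' t ≠ μ)).card ≤ n := by
        rcases le_or_gt (μ - x) (y - μ) with hc | hc
        · have haμ' : a = μ := by rw [hadef, hδdef, min_eq_left hc]; ring
          have hsub : Finset.univ.filter (fun t => α' t ≠ μ)
              ⊆ (Finset.univ.filter (fun t => α t ≠ μ)).erase i₀ := by
            intro t ht
            have ht' := (Finset.mem_filter.1 ht).2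
            have hti : t ≠ i₀ := by
              intro h; rw [h, hα'i, haμ'] at ht'; exact ht' rfl
            refine Finset.mem_erase.2 ⟨hti, Finset.mem_filter.2 ⟨Finset.mem_univ _, ?_⟩⟩
            by_cases htj : t = j₀
            · rw [htj]; exact fun h => hj₀.ne' (hydef.trans h)
            · rw [← hα'o t hti htj]; exact ht'
          have := Finset.card_le_card hsub
          rw [Finset.card_erase_of_mem hbadmem] at this
          omega
        · have hbμ' : b = μ := by rw [hbdef, hδdef, min_eq_right hc.le]; ring
          have hsub : Finset.univ.filter (fun t => α' t ≠ μ)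
              ⊆ (Finset.univ.filter (fun t => α t ≠ μ)).erase j₀ := by
            intro t ht
            have ht' := (Finset.mem_filter.1 ht).2
            have htj : t ≠ j₀ := by
              intro h; rw [h, hα'j, hbμ'] at ht'; exact ht' rfl
            refine Finset.mem_erase.2 ⟨htj, Finset.mem_filter.2 ⟨Finset.mem_univ _, ?_⟩⟩
            by_cases hti : t = i₀
            · rw [hti]; exact fun h => hi₀.ne (hxdef.trans h)
            · rw [← hα'o t hti htj]; exact ht'
          have := Finset.card_le_card hsub
          rw [Finset.card_erase_of_mem hbadmemj] at this
          omega
      have hμ' : (∑ t, α' t) / (k:ℝ) = μ := by rw [hsum']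
      have hT2 : Tsum k m d α' ≤ Tsum k m d (fun _ => (∑ t, α' t) / k) := by
        apply ih α' hα'
        rw [hμ']
        exact hcard'
      rw [hμ'] at hT2
      exact le_trans hT1 hT2

/-- The function
`g(α) = e^{-2∑ᵢ αᵢ} ∑_{ℓ=1}^d ∑_{|S|=ℓ} ∑_{z ∈ [m]^S, ∑_{i∈S} zᵢ = d} ∏_{i∈S} φ_{zᵢ}(αᵢ)`,
where the inner sum is encoded by functions `z : Fin k → Fin (m+1)` supported on `S`
with values in `{1,…,m}` on `S`. -/
noncomputable def gfun (k m d : ℕ) (α : Fin k → ℝ) : ℝ :=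
  Real.exp (-2 * ∑ i, α i) *
    ∑ ℓ ∈ Finset.Icc 1 d,
      ∑ S ∈ Finset.univ.filter (fun S : Finset (Fin k) => S.card = ℓ),
        ∑ z ∈ (Finset.univ : Finset (Fin k → Fin (m + 1))).filter
            (fun z => (∀ i, (i ∈ S → 1 ≤ (z i : ℕ)) ∧ (i ∉ S → (z i : ℕ) = 0)) ∧
              ∑ i ∈ S, (z i : ℕ) = d),
          ∏ i ∈ S, phi (z i : ℕ) (α i)

/-- `g` is Schur-concave; in particular its value at `α` is at most its value at the
uniform vector `(ᾱ, …, ᾱ)` with `ᾱ = (∑ᵢ αᵢ)/k`. -/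
theorem stmt15 (k m d : ℕ) (hk : 0 < k) (hm : 0 < m) (hd : 0 < d)
    (α : Fin k → ℝ) (hα : ∀ i, α i ∈ Set.Ioc (0 : ℝ) 1) :
    gfun k m d α ≤ gfun k m d (fun _ => (∑ i, α i) / k) := by
  have hk' : ((k:ℝ)) ≠ 0 := by positivity
  have hgf : ∀ γ : Fin k → ℝ,
      gfun k m d γ = Real.exp (-2 * ∑ i, γ i) * Tsum k m d γ := fun γ => rfl
  have hTs : (∑ _t : Fin k, (∑ i, α i) / (k:ℝ)) = ∑ i, α i := by
    rw [Finset.sum_const, Finset.card_univ, Fintype.card_fin, nsmul_eq_mul]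
    field_simp
  rw [hgf, hgf]
  simp only [hTs]
  exact mul_le_mul_of_nonneg_left (Tsum_le_uniform hk _ α hα le_rfl) (Real.exp_nonneg _)
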